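/- Let R be a ring and let f₁ : M → N₁, f₂ : M → N₂ be pure embeddings of R-modules. Then in the pushout P = (N₁ ⊕ N₂)/{(f₁(m), -f₂(m)) : m ∈ M}, the canonical maps g₁ : N₁ → P, n₁ ↦ [(n₁, 0)] and g₂ : N₂ → P, n₂ ↦ [(0, n₂)] are pure embeddings. -/
import Mathlib


universe u v

/-- A submodule `A ≤ M` is pure if every finite system of `R`-linear equations with
parameters in `A` that is solvable in `M` is solvable in `A`. -/
def IsPureSubmodule (R : Type u) [Ring R] {M : Type v} [AddCommGroup M] [Module R M]
    (A : Submodule R M) : Prop :=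
  ∀ (k n : ℕ) (c : Fin k → Fin n → R) (a : Fin k → M),
    (∀ i, a i ∈ A) →
    (∃ x : Fin n → M, ∀ i, (∑ j, c i j • x j) = a i) →
    ∃ x : Fin n → M, (∀ j, x j ∈ A) ∧ ∀ i, (∑ j, c i j • x j) = a i

/-- A linear map is a pure embedding if it is injective and its range is a pure submodule. -/
def IsPureEmbedding (R : Type u) [Ring R] {M N : Type v} [AddCommGroup M] [Module R M]
    [AddCommGroup N] [Module R N] (f : M →ₗ[R] N) : Prop :=
  Function.Injective f ∧ IsPureSubmodule R (LinearMap.range f)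

/-- A module is pure-injective if it is a direct summand of every module containing it
as a pure submodule, i.e. every pure embedding out of it admits a retraction. -/
def IsPureInjective (R : Type u) [Ring R] (M : Type v) [AddCommGroup M] [Module R M] : Prop :=
  ∀ (N : Type v) [AddCommGroup N] [Module R N] (f : M →ₗ[R] N),
    IsPureEmbedding R f → ∃ g : N →ₗ[R] M, g ∘ₗ f = LinearMap.id

/-- A module is absolutely pure if it is pure in every module containing it. -/
def IsAbsolutelyPure (R : Type u) [Ring R] (M : Type v) [AddCommGroup M] [Module R M] : Prop :=
  ∀ (N : Type v) [AddCommGroup N] [Module R N] (f : M →ₗ[R] N),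
    Function.Injective f → IsPureSubmodule R (LinearMap.range f)

theorem aux_inl {R : Type u} [Ring R] {M N₁ N₂ : Type v} [AddCommGroup M] [Module R M]
    [AddCommGroup N₁] [Module R N₁] [AddCommGroup N₂] [Module R N₂]
    (f₁ : M →ₗ[R] N₁) (f₂ : M →ₗ[R] N₂)
    (hinj : Function.Injective f₂) (hpure : IsPureSubmodule R (LinearMap.range f₂)) :
    IsPureEmbedding R ((LinearMap.range (f₁.prod (-f₂))).mkQ ∘ₗ LinearMap.inl R N₁ N₂) := by
  set K := LinearMap.range (f₁.prod (-f₂)) with hKdef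
  set g := K.mkQ ∘ₗ LinearMap.inl R N₁ N₂ with hgdef
  constructor
  · rw [injective_iff_map_eq_zero]
    intro nn hn
    have hmem : ((nn, 0) : N₁ × N₂) ∈ K := by
      have : K.mkQ ((nn, 0) : N₁ × N₂) = 0 := hn
      rwa [Submodule.mkQ_apply, Submodule.Quotient.mk_eq_zero] at this
    obtain ⟨m, hm⟩ := hmem
    have hm1 : f₁ m = nn := congrArg Prod.fst hm
    have hm2 : -f₂ m = 0 := congrArg Prod.snd hm
    have hmz : m = 0 := hinj (by rw [map_zero]; exact neg_eq_zero.mp hm2)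
    rw [← hm1, hmz, map_zero]
  · intro k n c a ha hsol
    obtain ⟨x, hx⟩ := hsol
    choose b hb using ha
    choose uv huv using fun j => Submodule.mkQ_surjective K (x j)
    have key : ∀ i, (∑ j, c i j • uv j) - (b i, 0) ∈ K := by
      intro i
      have h0 : K.mkQ ((∑ j, c i j • uv j) - ((b i, 0) : N₁ × N₂)) = 0 := by
        rw [map_sub, map_sum]
        simp only [map_smul, huv]
        have hbi : K.mkQ ((b i, 0) : N₁ × N₂) = a i := hb i
        rw [hbi, hx i, sub_self]
      rwa [Submodule.mkQ_apply, Submodule.Quotient.mk_eq_zero] at h0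
    choose m hm using fun i => LinearMap.mem_range.mp (key i)
    have hm1 : ∀ i, f₁ (m i) = (∑ j, c i j • (uv j).1) - b i := by
      intro i
      have := congrArg Prod.fst (hm i)
      simpa [Prod.fst_sum, Prod.snd_sum] using this
    have hm2 : ∀ i, -f₂ (m i) = ∑ j, c i j • (uv j).2 := by
      intro i
      have := congrArg Prod.snd (hm i)
      simpa [Prod.fst_sum, Prod.snd_sum] using this
    obtain ⟨y, hy_mem, hy⟩ := hpure k n c (fun i => ∑ j, c i j • (uv j).2)
      (fun i => ⟨-m i, by rw [map_neg]; exact hm2 i⟩)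
      ⟨fun j => (uv j).2, fun i => rfl⟩
    choose w hw using fun j => LinearMap.mem_range.mp (hy_mem j)
    have hw2 : ∀ i, (∑ j, c i j • w j) = -(m i) := by
      intro i
      apply hinj
      have h1 : f₂ (∑ j, c i j • w j) = ∑ j, c i j • y j := by
        rw [map_sum]; simp only [map_smul, hw]
      rw [h1, hy i, map_neg]
      exact (hm2 i).symm
    refine ⟨fun j => g ((uv j).1 + f₁ (w j)), fun j => ⟨_, rfl⟩, fun i => ?_⟩
    have hN1 : (∑ j, c i j • ((uv j).1 + f₁ (w j))) = b i := by
      have hsplit : (∑ j, c i j • ((uv j).1 + f₁ (w j)))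
          = (∑ j, c i j • (uv j).1) + f₁ (∑ j, c i j • w j) := by
        rw [map_sum]
        simp only [map_smul, smul_add, Finset.sum_add_distrib]
      rw [hsplit, hw2 i, map_neg, hm1 i]
      abel
    have hgs : (∑ j, c i j • g ((uv j).1 + f₁ (w j))) = g (b i) := by
      rw [← hN1, map_sum]
      simp only [map_smul]
    rw [hgs, hb i]

theorem aux_inr {R : Type u} [Ring R] {M N₁ N₂ : Type v} [AddCommGroup M] [Module R M]
    [AddCommGroup N₁] [Module R N₁] [AddCommGroup N₂] [Module R N₂]
    (f₁ : M →ₗ[R] N₁) (f₂ : M →ₗ[R] N₂)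
    (hinj : Function.Injective f₁) (hpure : IsPureSubmodule R (LinearMap.range f₁)) :
    IsPureEmbedding R ((LinearMap.range (f₁.prod (-f₂))).mkQ ∘ₗ LinearMap.inr R N₁ N₂) := by
  set K := LinearMap.range (f₁.prod (-f₂)) with hKdef
  set g := K.mkQ ∘ₗ LinearMap.inr R N₁ N₂ with hgdef
  constructor
  · rw [injective_iff_map_eq_zero]
    intro nn hn
    have hmem : ((0, nn) : N₁ × N₂) ∈ K := by
      have : K.mkQ ((0, nn) : N₁ × N₂) = 0 := hn
      rwa [Submodule.mkQ_apply, Submodule.Quotient.mk_eq_zero] at this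
    obtain ⟨m, hm⟩ := hmem
    have hm1 : f₁ m = 0 := congrArg Prod.fst hm
    have hm2 : -f₂ m = nn := congrArg Prod.snd hm
    have hmz : m = 0 := hinj (by rw [map_zero]; exact hm1)
    rw [← hm2, hmz, map_zero, neg_zero]
  · intro k n c a ha hsol
    obtain ⟨x, hx⟩ := hsol
    choose b hb using ha
    choose uv huv using fun j => Submodule.mkQ_surjective K (x j)
    have key : ∀ i, (∑ j, c i j • uv j) - (0, b i) ∈ K := by
      intro i
      have h0 : K.mkQ ((∑ j, c i j • uv j) - ((0, b i) : N₁ × N₂)) = 0 := by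
        rw [map_sub, map_sum]
        simp only [map_smul, huv]
        have hbi : K.mkQ ((0, b i) : N₁ × N₂) = a i := hb i
        rw [hbi, hx i, sub_self]
      rwa [Submodule.mkQ_apply, Submodule.Quotient.mk_eq_zero] at h0
    choose m hm using fun i => LinearMap.mem_range.mp (key i)
    have hm1 : ∀ i, f₁ (m i) = ∑ j, c i j • (uv j).1 := by
      intro i
      have := congrArg Prod.fst (hm i)
      simpa [Prod.fst_sum, Prod.snd_sum] using this
    have hm2 : ∀ i, -f₂ (m i) = (∑ j, c i j • (uv j).2) - b i := by
      intro i
      have := congrArg Prod.snd (hm i)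
      simpa [Prod.fst_sum, Prod.snd_sum] using this
    obtain ⟨y, hy_mem, hy⟩ := hpure k n c (fun i => ∑ j, c i j • (uv j).1)
      (fun i => ⟨m i, hm1 i⟩)
      ⟨fun j => (uv j).1, fun i => rfl⟩
    choose w hw using fun j => LinearMap.mem_range.mp (hy_mem j)
    have hw2 : ∀ i, (∑ j, c i j • w j) = m i := by
      intro i
      apply hinj
      have h1 : f₁ (∑ j, c i j • w j) = ∑ j, c i j • y j := by
        rw [map_sum]; simp only [map_smul, hw]
      rw [h1, hy i]
      exact (hm1 i).symm
    refine ⟨fun j => g ((uv j).2 + f₂ (w j)), fun j => ⟨_, rfl⟩, fun i => ?_⟩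
    have hN2 : (∑ j, c i j • ((uv j).2 + f₂ (w j))) = b i := by
      have hsplit : (∑ j, c i j • ((uv j).2 + f₂ (w j)))
          = (∑ j, c i j • (uv j).2) + f₂ (∑ j, c i j • w j) := by
        rw [map_sum]
        simp only [map_smul, smul_add, Finset.sum_add_distrib]
      have h2 : (∑ j, c i j • (uv j).2) = b i - f₂ (m i) := by
        have := hm2 i
        rw [eq_sub_iff_add_eq] at this ⊢
        rw [← this]; abel
      rw [hsplit, hw2 i, h2]
      abel
    have hgs : (∑ j, c i j • g ((uv j).2 + f₂ (w j))) = g (b i) := by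
      rw [← hN2, map_sum]
      simp only [map_smul]
    rw [hgs, hb i]

/-- the canonical maps into the pushout of a span of pure embeddings
are pure embeddings. -/
theorem stmt5 (R : Type u) [Ring R]
    (M N₁ N₂ : Type u) [AddCommGroup M] [Module R M]
    [AddCommGroup N₁] [Module R N₁] [AddCommGroup N₂] [Module R N₂]
    (f₁ : M →ₗ[R] N₁) (f₂ : M →ₗ[R] N₂)
    (hf₁ : IsPureEmbedding R f₁) (hf₂ : IsPureEmbedding R f₂) :
    IsPureEmbedding R
      ((LinearMap.range (f₁.prod (-f₂))).mkQ ∘ₗ LinearMap.inl R N₁ N₂) ∧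
    IsPureEmbedding R
      ((LinearMap.range (f₁.prod (-f₂))).mkQ ∘ₗ LinearMap.inr R N₁ N₂) := by
  exact ⟨aux_inl f₁ f₂ hf₂.1 hf₂.2, aux_inr f₁ f₂ hf₁.1 hf₁.2⟩
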